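/- Let L > 0, ε > 0, λ = 608ε/L, let d ≥ 1 be an integer, and define f : ℝ^d → ℝ by f(x) = (Lλ²/152) H_d(x/λ). Then for every x ∈ ℝ^d with prog_0(x) < d one has ‖∇f(x)‖ ≥ 4ε; equivalently, ‖∇f(x)‖ ≥ 4ε · 𝟙[prog_0(x) < d] for all x ∈ ℝ^d. -/

import Mathlib

/-- `Ψ(t) = 0` for `t ≤ 1/2` and `Ψ(t) = exp(1 − 1/(2t−1)²)` for `t > 1/2`. -/
noncomputable def Psi (t : ℝ) : ℝ :=
  if t ≤ 1 / 2 then 0 else Real.exp (1 - 1 / (2 * t - 1) ^ 2)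

/-- `Φ(t) = √e ∫_{−∞}^{t} exp(−τ²/2) dτ`. -/
noncomputable def Phi (t : ℝ) : ℝ :=
  Real.sqrt (Real.exp 1) * ∫ τ in Set.Iic t, Real.exp (-τ ^ 2 / 2)

/-- The `i`-th coordinate (1-based, `1 ≤ i ≤ d`) of a vector in `ℝ^d`;
zero when out of range. -/
noncomputable def coord (d : ℕ) (y : EuclideanSpace ℝ (Fin d)) (i : ℕ) : ℝ :=
  if h : i - 1 < d then y ⟨i - 1, h⟩ else 0

/-- The chain function
`H_d(x) = −Ψ(1)Φ(x₁) + ∑_{i=2}^d (Ψ(−x_{i−1})Φ(−x_i) − Ψ(x_{i−1})Φ(x_i))`. -/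
noncomputable def Hchain (d : ℕ) (y : EuclideanSpace ℝ (Fin d)) : ℝ :=
  -Psi 1 * Phi (coord d y 1) +
    ∑ i ∈ Finset.Icc 2 d,
      (Psi (-coord d y (i - 1)) * Phi (-coord d y i) -
        Psi (coord d y (i - 1)) * Phi (coord d y i))

open Classical in
/-- The progress index `prog_a(x) = max({i ∈ {1,…,d} : |x_i| > a} ∪ {0})`. -/
noncomputable def prog (d : ℕ) (a : ℝ) (y : EuclideanSpace ℝ (Fin d)) : ℕ :=
  ((Finset.Icc 1 d).filter fun i => a < |coord d y i|).sup id

noncomputable def psi' (t : ℝ) : ℝ :=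
  if t ≤ 1 / 2 then 0 else Real.exp (1 - 1 / (2 * t - 1) ^ 2) * (4 / (2 * t - 1) ^ 3)

noncomputable def phi' (t : ℝ) : ℝ := Real.sqrt (Real.exp 1) * Real.exp (-t ^ 2 / 2)


lemma Psi_nonneg (t : ℝ) : 0 ≤ Psi t := by
  unfold Psi; split
  · exact le_refl 0
  · positivity

lemma psi'_nonneg (t : ℝ) : 0 ≤ psi' t := by
  unfold psi'; split
  · exact le_refl 0
  · rename_i h
    push_neg at h
    have : (0:ℝ) < 2 * t - 1 := by linarith
    positivity

lemma one_le_Psi {t : ℝ} (h : 1 < t) : 1 ≤ Psi t := by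
  unfold Psi
  rw [if_neg (by push_neg; linarith)]
  have h2 : (1:ℝ) < (2 * t - 1) ^ 2 := by nlinarith
  have h3 : 1 / (2 * t - 1) ^ 2 ≤ 1 := by
    rw [div_le_one (by linarith)]; linarith
  calc (1:ℝ) = Real.exp 0 := Real.exp_zero.symm
    _ ≤ _ := Real.exp_le_exp.2 (by linarith)

lemma Psi_le (s : ℝ) : Psi s ≤ Real.exp 1 * (2 * s - 1) ^ 2 := by
  unfold Psi; split
  · positivity
  · rename_i h
    push_neg at h
    set u : ℝ := (2 * s - 1) ^ 2 with hu
    have h1 : (0:ℝ) < 2 * s - 1 := by linarith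
    have h2 : (0:ℝ) < u := by positivity
    have h3 : 1 / u + 1 ≤ Real.exp (1 / u) := Real.add_one_le_exp _
    have h4 : Real.exp (1 - 1 / u) = Real.exp 1 / Real.exp (1 / u) := by
      rw [Real.exp_sub]
    rw [h4, div_le_iff₀ (Real.exp_pos _)]
    have h5 : 1 + u ≤ u * Real.exp (1 / u) := by
      have := mul_le_mul_of_nonneg_left h3 h2.le
      calc 1 + u = u * (1 / u + 1) := by field_simp
        _ ≤ u * Real.exp (1 / u) := this
    calc Real.exp 1 = Real.exp 1 * 1 := (mul_one _).symm
      _ ≤ Real.exp 1 * (u * Real.exp (1/u)) := by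
          apply mul_le_mul_of_nonneg_left _ (Real.exp_pos 1).le
          linarith
      _ = Real.exp 1 * u * Real.exp (1/u) := by ring

lemma hasDerivAt_Psi (t : ℝ) : HasDerivAt Psi (psi' t) t := by
  rcases lt_trichotomy t (1/2) with h | h | h
  · have he : Psi =ᶠ[nhds t] fun _ => (0:ℝ) := by
      filter_upwards [eventually_lt_nhds h] with s hs
      rw [Psi, if_pos hs.le]
    rw [psi', if_pos h.le]
    exact (hasDerivAt_const t (0:ℝ)).congr_of_eventuallyEq he
  · subst h
    rw [hasDerivAt_iff_tendsto_slope, show psi' (1/2) = 0 by simp [psi']]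
    refine squeeze_zero_norm (a := fun s => 4 * Real.exp 1 * |s - 1/2|) (fun s => ?_) ?_
    · rw [slope_def_field, show Psi (1/2) = 0 by simp [Psi]]
      rcases eq_or_ne s (1/2) with rfl | hs
      · simp
      · have hpos : (0:ℝ) < |s - 1/2| := by
          rw [abs_pos]; intro hc; exact hs (by linarith)
        have habs : |Psi s| ≤ Real.exp 1 * (2 * s - 1) ^ 2 := by
          rw [abs_of_nonneg (Psi_nonneg s)]; exact Psi_le s
        rw [sub_zero, Real.norm_eq_abs, abs_div]
        rw [div_le_iff₀ hpos]
        have hsq : |s - 1/2| * |s - 1/2| = (s - 1/2) ^ 2 := by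
          rw [abs_mul_abs_self]; ring
        calc |Psi s| ≤ Real.exp 1 * (2 * s - 1) ^ 2 := habs
          _ = 4 * Real.exp 1 * (|s - 1/2| * |s - 1/2|) := by rw [hsq]; ring
          _ = 4 * Real.exp 1 * |s - 1/2| * |s - 1/2| := by ring
    · have hc : ContinuousAt (fun s : ℝ => 4 * Real.exp 1 * |s - 1/2|) (1/2) := by fun_prop
      have h0 := hc.tendsto
      simp only [sub_self, abs_zero, mul_zero] at h0
      exact h0.mono_left nhdsWithin_le_nhds
  · have h1 : (0:ℝ) < 2 * t - 1 := by linarith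
    have hw : HasDerivAt (fun s : ℝ => 2 * s - 1) 2 t := by
      simpa using ((hasDerivAt_id t).const_mul 2).sub_const 1
    have hv : HasDerivAt (fun s : ℝ => (2 * s - 1) ^ 2) (2 * (2 * t - 1) ^ 1 * 2) t := hw.pow 2
    have hinv : HasDerivAt (fun s : ℝ => ((2 * s - 1) ^ 2)⁻¹)
        (-(2 * (2 * t - 1) ^ 1 * 2) / ((2 * t - 1) ^ 2) ^ 2) t := hv.inv (by positivity)
    have hu : HasDerivAt (fun s : ℝ => 1 - 1 / (2 * s - 1) ^ 2)
        (0 - -(2 * (2 * t - 1) ^ 1 * 2) / ((2 * t - 1) ^ 2) ^ 2) t := by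
      simpa [one_div] using (hasDerivAt_const t (1:ℝ)).fun_sub hinv
    have hg := hu.exp
    have he : (fun s => Real.exp (1 - 1 / (2 * s - 1) ^ 2)) =ᶠ[nhds t] Psi := by
      filter_upwards [eventually_gt_nhds h] with s hs
      rw [Psi, if_neg (by push_neg; linarith)]
    have hfinal := hg.congr_of_eventuallyEq he.symm
    convert hfinal using 1
    · rfl
    · rfl
    rw [psi', if_neg (by push_neg; linarith)]
    have : ((2 * t - 1) ^ 2) ^ 2 ≠ 0 := by positivity
    field_simp
    ring

lemma gauss_integrable : MeasureTheory.Integrable (fun τ : ℝ => Real.exp (-τ ^ 2 / 2)) := by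
  have h := integrable_exp_neg_mul_sq (by norm_num : (0:ℝ) < 1/2)
  convert h using 2 with τ
  ring_nf

lemma Phi_nonneg (t : ℝ) : 0 ≤ Phi t := by
  unfold Phi
  apply mul_nonneg (Real.sqrt_nonneg _)
  exact MeasureTheory.integral_nonneg fun τ => (Real.exp_pos _).le

lemma hasDerivAt_Phi (t : ℝ) : HasDerivAt Phi (phi' t) t := by
  have hInt : ∀ s : ℝ, (∫ τ in Set.Iic s, Real.exp (-τ ^ 2 / 2)) =
      (∫ τ in Set.Iic 0, Real.exp (-τ ^ 2 / 2)) + ∫ τ in (0:ℝ)..s, Real.exp (-τ ^ 2 / 2) := by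
    intro s
    have := intervalIntegral.integral_Iic_sub_Iic (gauss_integrable.integrableOn)
      (gauss_integrable.integrableOn) (a := 0) (b := s) (μ := MeasureTheory.volume)
    linarith [this]
  have hd : HasDerivAt (fun s => ∫ τ in (0:ℝ)..s, Real.exp (-τ ^ 2 / 2))
      (Real.exp (-t ^ 2 / 2)) t := by
    apply intervalIntegral.integral_hasDerivAt_right
      (gauss_integrable.intervalIntegrable)
    · exact (Continuous.stronglyMeasurableAtFilter (by fun_prop) _ _)
    · fun_prop
  have : HasDerivAt (fun s => Real.sqrt (Real.exp 1) *
      ((∫ τ in Set.Iic 0, Real.exp (-τ ^ 2 / 2)) + ∫ τ in (0:ℝ)..s, Real.exp (-τ ^ 2 / 2)))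
      (Real.sqrt (Real.exp 1) * Real.exp (-t ^ 2 / 2)) t :=
    (((hasDerivAt_const t _).add hd).const_mul _).congr_deriv (by ring)
  refine this.congr_of_eventuallyEq (Filter.Eventually.of_forall fun s => ?_)
  rw [Phi, hInt s]

lemma sqrt_exp_one : Real.sqrt (Real.exp 1) = Real.exp (1/2) := by
  rw [show Real.exp 1 = Real.exp (1/2) ^ 2 by rw [sq, ← Real.exp_add]; norm_num]
  exact Real.sqrt_sq (Real.exp_pos _).le

lemma phi'_nonneg (t : ℝ) : 0 ≤ phi' t := by
  unfold phi'; positivity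

lemma phi'_neg (t : ℝ) : phi' (-t) = phi' t := by
  unfold phi'; rw [neg_pow]; norm_num

lemma one_le_phi' {t : ℝ} (h : |t| ≤ 1) : 1 ≤ phi' t := by
  unfold phi'
  rw [sqrt_exp_one, ← Real.exp_add]
  have ht : t ^ 2 ≤ 1 := by
    rw [← sq_abs]
    nlinarith [abs_nonneg t]
  calc (1:ℝ) = Real.exp 0 := Real.exp_zero.symm
    _ ≤ _ := Real.exp_le_exp.2 (by linarith)

lemma differentiable_Psi : Differentiable ℝ Psi := fun t => (hasDerivAt_Psi t).differentiableAt
lemma differentiable_Phi : Differentiable ℝ Phi := fun t => (hasDerivAt_Phi t).differentiableAt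


lemma differentiable_coord (d : ℕ) (i : ℕ) :
    Differentiable ℝ (fun y : EuclideanSpace ℝ (Fin d) => coord d y i) := by
  unfold coord
  split
  · rename_i h
    exact (EuclideanSpace.proj (⟨i - 1, h⟩ : Fin d) : EuclideanSpace ℝ (Fin d) →L[ℝ] ℝ).differentiable
  · exact differentiable_const 0

lemma differentiable_Hchain (d : ℕ) : Differentiable ℝ (Hchain d) := by
  unfold Hchain
  apply Differentiable.add
  · exact (differentiable_Phi.comp (differentiable_coord d 1)).const_mul _
  · apply Differentiable.fun_sum
    intro i _
    exact ((differentiable_Psi.comp (differentiable_coord d (i-1)).neg).mul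
      (differentiable_Phi.comp (differentiable_coord d i).neg)).sub
      ((differentiable_Psi.comp (differentiable_coord d (i-1))).mul
      (differentiable_Phi.comp (differentiable_coord d i)))

lemma coord_smul (d : ℕ) (c : ℝ) (y : EuclideanSpace ℝ (Fin d)) (i : ℕ) :
    coord d (c • y) i = c * coord d y i := by
  unfold coord
  split
  · rfl
  · exact (mul_zero c).symm

open Classical in
lemma prog_smul (d : ℕ) (c : ℝ) (hc : c ≠ 0) (y : EuclideanSpace ℝ (Fin d)) :
    prog d 0 (c • y) = prog d 0 y := by
  unfold prog
  congr 1
  apply Finset.filter_congr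
  intro i _
  simp [coord_smul, abs_pos, mul_ne_zero_iff, hc]

open Classical in
lemma prog_mono_a (d : ℕ) (y : EuclideanSpace ℝ (Fin d)) :
    prog d 1 y ≤ prog d 0 y := by
  unfold prog
  apply Finset.sup_mono
  intro i hi
  simp only [Finset.mem_filter] at hi ⊢
  exact ⟨hi.1, lt_trans one_pos hi.2⟩

open Classical in
lemma abs_coord_le_of_lt_of_prog {d : ℕ} {a : ℝ} {y : EuclideanSpace ℝ (Fin d)} {k : ℕ}
    (h1 : 1 ≤ k) (h2 : k ≤ d) (h3 : prog d a y < k) : |coord d y k| ≤ a := by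
  by_contra hc
  push_neg at hc
  have hk : k ∈ (Finset.Icc 1 d).filter fun i => a < |coord d y i| := by
    simp [Finset.mem_filter, Finset.mem_Icc, h1, h2, hc]
  have := Finset.le_sup (f := id) hk
  simp only [id] at this
  exact absurd (lt_of_le_of_lt this h3) (lt_irrefl k)

open Classical in
lemma one_lt_abs_coord_prog {d : ℕ} {y : EuclideanSpace ℝ (Fin d)}
    (h : 1 ≤ prog d 1 y) : 1 < |coord d y (prog d 1 y)| := by
  classical
  set S := (Finset.Icc 1 d).filter fun i => (1:ℝ) < |coord d y i| with hS
  have hne : S.Nonempty := by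
    by_contra hc
    rw [Finset.not_nonempty_iff_eq_empty] at hc
    have : prog d 1 y = 0 := by unfold prog; rw [← hS, hc]; rfl
    omega
  obtain ⟨b, hb, hbe⟩ := Finset.exists_mem_eq_sup S hne id
  have : prog d 1 y = b := hbe
  rw [this]
  exact (Finset.mem_filter.1 hb).2

lemma coord_add_smul (d : ℕ) (y : EuclideanSpace ℝ (Fin d)) (s : ℝ) {j : ℕ} (hj1 : 1 ≤ j)
    (hjf : j - 1 < d) {k : ℕ} (hk1 : 1 ≤ k) :
    coord d (y + s • EuclideanSpace.single (⟨j - 1, hjf⟩ : Fin d) (1 : ℝ)) k =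
      coord d y k + s * (if k = j then 1 else 0) := by
  unfold coord
  split
  · rename_i h
    have happ : (y + s • EuclideanSpace.single (⟨j - 1, hjf⟩ : Fin d) (1 : ℝ)) ⟨k - 1, h⟩
        = y ⟨k - 1, h⟩ + s * (EuclideanSpace.single (⟨j - 1, hjf⟩ : Fin d) (1 : ℝ)) ⟨k - 1, h⟩ :=
      rfl
    rw [happ, EuclideanSpace.single_apply]
    by_cases hkj : k = j
    · subst hkj
      rw [if_pos rfl, if_pos rfl]
    · rw [if_neg (by simp only [Fin.mk.injEq]; omega), if_neg hkj]
  · rename_i h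
    rw [if_neg (by omega : ¬ k = j), mul_zero, add_zero]

lemma hasDerivAt_affine_comp {g g' : ℝ → ℝ} (hg : ∀ t, HasDerivAt g (g' t) t)
    (a c : ℝ) : HasDerivAt (fun s : ℝ => g (a + s * c)) (g' a * c) 0 := by
  have hF : HasDerivAt (fun s : ℝ => a + s * c) c 0 := by
    simpa using ((hasDerivAt_id (0:ℝ)).mul_const c).const_add a
  have h1 := (hg (a + 0 * c)).comp 0 hF
  simpa [Function.comp_def] using h1

lemma hasDerivAt_affine_comp_neg {g g' : ℝ → ℝ} (hg : ∀ t, HasDerivAt g (g' t) t)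
    (a c : ℝ) : HasDerivAt (fun s : ℝ => g (-(a + s * c))) (g' (-a) * (-c)) 0 := by
  have h1 := hasDerivAt_affine_comp hg (-a) (-c)
  refine h1.congr_of_eventuallyEq (Filter.Eventually.of_forall fun s => ?_)
  congr 1
  ring

open Classical in
lemma key_deriv (d : ℕ) (hd : 1 ≤ d) (y : EuclideanSpace ℝ (Fin d)) (hp : prog d 0 y < d) :
    ∃ (j : ℕ) (hjf : j - 1 < d) (D : ℝ),
      HasDerivAt
        (fun s : ℝ => Hchain d (y + s • EuclideanSpace.single (⟨j - 1, hjf⟩ : Fin d) (1 : ℝ)))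
        D 0 ∧ 1 ≤ |D| := by
  classical
  set i0 := prog d 1 y with hi0def
  have hi0 : i0 ≤ prog d 0 y := prog_mono_a d y
  set j := i0 + 1 with hjdef
  have hj1 : 1 ≤ j := by omega
  have hjd : j ≤ d := by omega
  have hjf : j - 1 < d := by omega
  set E := EuclideanSpace.single (⟨j - 1, hjf⟩ : Fin d) (1 : ℝ) with hE
  set C : ℕ → ℝ := fun k => coord d y k with hC
  set δ : ℕ → ℝ := fun k => if k = j then 1 else 0 with hδ
  have hδ01 : ∀ k, 0 ≤ δ k := by
    intro k; rw [hδ]; dsimp only; split <;> norm_num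
  -- derivative value for each summand
  set v : ℕ → ℝ := fun i =>
    -(psi' (-(C (i-1))) * δ (i-1) * Phi (-(C i)) + Psi (-(C (i-1))) * phi' (-(C i)) * δ i
      + psi' (C (i-1)) * δ (i-1) * Phi (C i) + Psi (C (i-1)) * phi' (C i) * δ i) with hv
  set D : ℝ := -Psi 1 * (phi' (C 1) * δ 1) + ∑ i ∈ Finset.Icc 2 d, v i with hD
  refine ⟨j, hjf, D, ?_, ?_⟩
  · -- HasDerivAt
    have heq : (fun s : ℝ => Hchain d (y + s • E)) =
        (fun s : ℝ => -Psi 1 * Phi (C 1 + s * δ 1) +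
          ∑ i ∈ Finset.Icc 2 d,
            (Psi (-(C (i-1) + s * δ (i-1))) * Phi (-(C i + s * δ i)) -
             Psi (C (i-1) + s * δ (i-1)) * Phi (C i + s * δ i))) := by
      funext s
      simp only [Hchain]
      rw [coord_add_smul d y s hj1 hjf (le_refl 1)]
      congr 1
      apply Finset.sum_congr rfl
      intro i hi
      simp only [Finset.mem_Icc] at hi
      rw [coord_add_smul d y s hj1 hjf (by omega : 1 ≤ i - 1),
        coord_add_smul d y s hj1 hjf (by omega : 1 ≤ i)]
    rw [heq]
    have h0 : HasDerivAt (fun s : ℝ => -Psi 1 * Phi (C 1 + s * δ 1))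
        (-Psi 1 * (phi' (C 1) * δ 1)) 0 :=
      (hasDerivAt_affine_comp hasDerivAt_Phi (C 1) (δ 1)).const_mul _
    have hsum : HasDerivAt (fun s : ℝ => ∑ i ∈ Finset.Icc 2 d,
          (Psi (-(C (i-1) + s * δ (i-1))) * Phi (-(C i + s * δ i)) -
           Psi (C (i-1) + s * δ (i-1)) * Phi (C i + s * δ i)))
        (∑ i ∈ Finset.Icc 2 d, v i) 0 := by
      apply HasDerivAt.fun_sum
      intro i _
      have hA := hasDerivAt_affine_comp_neg hasDerivAt_Psi (C (i-1)) (δ (i-1))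
      have hB := hasDerivAt_affine_comp_neg hasDerivAt_Phi (C i) (δ i)
      have hC2 := hasDerivAt_affine_comp hasDerivAt_Psi (C (i-1)) (δ (i-1))
      have hD2 := hasDerivAt_affine_comp hasDerivAt_Phi (C i) (δ i)
      have h := (hA.fun_mul hB).fun_sub (hC2.fun_mul hD2)
      convert h using 1
      rw [hv]
      dsimp only
      norm_num
      ring
    exact h0.add hsum
  · -- 1 ≤ |D|
    have hvn : ∀ i, 0 ≤ -v i := by
      intro i
      rw [hv]
      dsimp only
      rw [neg_neg]
      have := Psi_nonneg (-(C (i-1)))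
      have := Psi_nonneg (C (i-1))
      have := psi'_nonneg (-(C (i-1)))
      have := psi'_nonneg (C (i-1))
      have := Phi_nonneg (-(C i))
      have := Phi_nonneg (C i)
      have := phi'_nonneg (-(C i))
      have := phi'_nonneg (C i)
      have := hδ01 (i-1)
      have := hδ01 i
      positivity
    have habsj : |C j| ≤ 1 := by
      apply abs_coord_le_of_lt_of_prog hj1 hjd
      omega
    have hphij : 1 ≤ phi' (C j) := one_le_phi' habsj
    have hD1 : 1 ≤ -D := by
      have expand : -D = Psi 1 * (phi' (C 1) * δ 1) + ∑ i ∈ Finset.Icc 2 d, -v i := by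
        rw [hD, neg_add, ← Finset.sum_neg_distrib]
        ring
      rw [expand]
      rcases Nat.eq_zero_or_pos i0 with h0 | h0
      · -- j = 1
        have hj1' : j = 1 := by omega
        have hδ1 : δ 1 = 1 := by rw [hδ]; norm_num [hj1']
        have hPsi1 : Psi 1 = 1 := by
          rw [Psi, if_neg (by norm_num)]
          norm_num
        have hC1 : C 1 = C j := by rw [hj1']
        have hsum0 : 0 ≤ ∑ i ∈ Finset.Icc 2 d, -v i :=
          Finset.sum_nonneg fun i _ => hvn i
        have heq1 : Psi 1 * (phi' (C 1) * δ 1) = phi' (C j) := by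
          rw [hPsi1, hδ1, hC1]; ring
        rw [heq1]
        linarith
      · -- j ≥ 2
        have hj2 : 2 ≤ j := by omega
        have hjmem : j ∈ Finset.Icc 2 d := by simp [Finset.mem_Icc]; omega
        have hsum_ge : -v j ≤ ∑ i ∈ Finset.Icc 2 d, -v i :=
          Finset.single_le_sum (fun i _ => hvn i) hjmem
        have hfirst : 0 ≤ Psi 1 * (phi' (C 1) * δ 1) := by
          have := Psi_nonneg 1; have := phi'_nonneg (C 1); have := hδ01 1
          positivity
        have hδj : δ j = 1 := by rw [hδ]; simp
        have hCi0 : 1 < |C i0| := one_lt_abs_coord_prog h0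
        have hPsiSum : 1 ≤ Psi (-(C (j-1))) + Psi (C (j-1)) := by
          have hji : j - 1 = i0 := by omega
          rw [hji]
          rcases le_or_gt 0 (C i0) with hs | hs
          · have : 1 < C i0 := by rwa [abs_of_nonneg hs] at hCi0
            have := one_le_Psi this
            have := Psi_nonneg (-(C i0))
            linarith
          · have : 1 < -(C i0) := by rwa [abs_of_neg hs] at hCi0
            have := one_le_Psi this
            have := Psi_nonneg (C i0)
            linarith
        have hvj : 1 ≤ -v j := by
          rw [hv]
          dsimp only
          rw [neg_neg, hδj, phi'_neg]
          have h1 : 1 ≤ (Psi (-(C (j-1))) + Psi (C (j-1))) * phi' (C j) := by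
            nlinarith [Psi_nonneg (-(C (j-1))), Psi_nonneg (C (j-1))]
          rw [add_mul] at h1
          have p1 : 0 ≤ psi' (-(C (j-1))) * δ (j-1) * Phi (-(C j)) :=
            mul_nonneg (mul_nonneg (psi'_nonneg _) (hδ01 _)) (Phi_nonneg _)
          have p2 : 0 ≤ psi' (C (j-1)) * δ (j-1) * Phi (C j) :=
            mul_nonneg (mul_nonneg (psi'_nonneg _) (hδ01 _)) (Phi_nonneg _)
          linarith
        linarith
    calc (1:ℝ) ≤ -D := hD1
      _ ≤ |D| := neg_le_abs D


/-- For the scaled hard instance `f(x) = (Lλ²/152) H_d(x/λ)` with `λ = 608ε/L`,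
every `x` with `prog_0(x) < d` satisfies `‖∇f(x)‖ ≥ 4ε`; equivalently,
`‖∇f(x)‖ ≥ 4ε·𝟙[prog_0(x) < d]` for all `x`. -/
theorem scaled_chain_gradient_lower_bound (d : ℕ) (hd : 1 ≤ d)
    (L ε lam : ℝ) (hL : 0 < L) (hε : 0 < ε) (hlam : lam = 608 * ε / L)
    (f : EuclideanSpace ℝ (Fin d) → ℝ)
    (hf : ∀ x, f x = L * lam ^ 2 / 152 * Hchain d (lam⁻¹ • x)) :
    (∀ x, prog d 0 x < d → 4 * ε ≤ ‖gradient f x‖) ∧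
      ∀ x, 4 * ε * (if prog d 0 x < d then (1 : ℝ) else 0) ≤ ‖gradient f x‖ := by
  have hlam0 : 0 < lam := by rw [hlam]; positivity
  set c0 := L * lam ^ 2 / 152 with hc0def
  have hc0pos : 0 < c0 := by rw [hc0def]; positivity
  have hfe : f = fun x => c0 * Hchain d (lam⁻¹ • x) := funext hf
  have hdiff : Differentiable ℝ f := by
    rw [hfe]
    exact ((differentiable_Hchain d).comp (differentiable_id.const_smul lam⁻¹)).const_mul _
  have main : ∀ x, prog d 0 x < d → 4 * ε ≤ ‖gradient f x‖ := by
    intro x hx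
    set y := lam⁻¹ • x with hy
    have hpy : prog d 0 y < d := by
      rw [hy, prog_smul d _ (inv_ne_zero hlam0.ne') x]; exact hx
    obtain ⟨j, hjf, D, hDer, hD1⟩ := key_deriv d hd y hpy
    set E := EuclideanSpace.single (⟨j - 1, hjf⟩ : Fin d) (1 : ℝ) with hE
    have hslice : ∀ t : ℝ, f (x + t • E) = c0 * Hchain d (y + (lam⁻¹ * t) • E) := by
      intro t
      rw [hf]
      congr 2
      rw [smul_add, smul_smul, hy]
    have hinner : HasDerivAt (fun t : ℝ => lam⁻¹ * t) lam⁻¹ 0 := by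
      simpa using (hasDerivAt_id (0:ℝ)).const_mul lam⁻¹
    have hDer' : HasDerivAt (fun s : ℝ => Hchain d (y + s • E)) D (lam⁻¹ * 0) := by
      rwa [mul_zero]
    have hcomp := hDer'.comp 0 hinner
    have hg : HasDerivAt (fun t : ℝ => f (x + t • E)) (c0 * (D * lam⁻¹)) 0 := by
      refine (hcomp.const_mul c0).congr_of_eventuallyEq
        (Filter.Eventually.of_forall fun t => ?_)
      show f (x + t • E) = c0 * Hchain d (y + (lam⁻¹ * t) • E)
      exact hslice t
    have hline : HasDerivAt (fun t : ℝ => x + t • E) E 0 := by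
      simpa using ((hasDerivAt_id (0:ℝ)).smul_const E).const_add x
    have hF : HasFDerivAt f (fderiv ℝ f x) x := (hdiff x).hasFDerivAt
    have hgd : HasDerivAt (fun t : ℝ => f (x + t • E)) ((fderiv ℝ f x) E) 0 := by
      have hx0 : x + (0:ℝ) • E = x := by simp
      have h2 : HasFDerivAt f (fderiv ℝ f x) ((fun t : ℝ => x + t • E) 0) := by
        simpa [hx0] using hF
      simpa [Function.comp_def] using h2.comp_hasDerivAt 0 hline
    have huniq : (fderiv ℝ f x) E = c0 * (D * lam⁻¹) := hgd.unique hg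
    have hnorm : ‖gradient f x‖ = ‖fderiv ℝ f x‖ := by
      unfold gradient
      exact LinearIsometryEquiv.norm_map _ _
    have hEnorm : ‖E‖ = 1 := by rw [hE, EuclideanSpace.norm_single]; norm_num
    have hbound : |(fderiv ℝ f x) E| ≤ ‖fderiv ℝ f x‖ := by
      calc |(fderiv ℝ f x) E| = ‖(fderiv ℝ f x) E‖ := rfl
        _ ≤ ‖fderiv ℝ f x‖ * ‖E‖ := (fderiv ℝ f x).le_opNorm E
        _ = ‖fderiv ℝ f x‖ := by rw [hEnorm, mul_one]
    have hval : |(fderiv ℝ f x) E| = c0 * lam⁻¹ * |D| := by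
      rw [huniq, abs_mul, abs_mul, abs_of_pos hc0pos, abs_of_pos (inv_pos.2 hlam0)]
      ring
    have hc0lam : c0 * lam⁻¹ = 4 * ε := by
      rw [hc0def, hlam]
      field_simp
      ring
    have h4 : 4 * ε ≤ |(fderiv ℝ f x) E| := by
      rw [hval, hc0lam]
      nlinarith
    rw [hnorm]
    linarith
  refine ⟨main, fun x => ?_⟩
  by_cases hx : prog d 0 x < d
  · rw [if_pos hx, mul_one]
    exact main x hx
  · rw [if_neg hx, mul_zero]
    exact norm_nonneg _
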